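/- Let ℓ be a fixed positive integer and let σ_0, σ ∈ L_{2ℓ}^2 be perfect matchings of {1,…,2ℓ} with #(σ ∨ σ_0) = 1. There is a constant C, depending only on ℓ, such that for every integer n ≥ 2 and every σ-measurable word j = (j_1,…,j_{2ℓ}) ∈ {1,…,n}^{2ℓ}, the product of two-element cumulants C_{σ_0}(j) = Π_{{a,b}∈σ_0} C(Z_{j_a}, Z_{j_b}) satisfies |C_{σ_0}(j)| ≤ C·n^{−d(j)} whenever d(j) ≥ 2, and |C_{σ_0}(j)| ≤ C whenever d(j) = 1, where d(j) denotes the number of distinct values among j_1,…,j_{2ℓ}. -/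

import Mathlib

open MeasureTheory ProbabilityTheory Finset

noncomputable section

instance permMS (n : ℕ) : MeasurableSpace (Equiv.Perm (Fin n)) := ⊤

/-- The uniform probability measure on the set of all `n!` permutations of `{1,…,n}`. -/
def permMeasure (n : ℕ) : Measure (Equiv.Perm (Fin n)) :=
  (PMF.uniformOfFintype (Equiv.Perm (Fin n))).toMeasure

/-- The rank `Q_i` of the random permutation, as a real number in `{1,…,n}`. -/
def Qr (n : ℕ) (i : Fin n) (σ : Equiv.Perm (Fin n)) : ℝ := (σ i : ℕ) + 1

/-- The centralized and normalized rank `Z_i = sqrt(12/(n²−1))·(Q_i − (n+1)/2)`. -/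
def Zr (n : ℕ) (i : Fin n) (σ : Equiv.Perm (Fin n)) : ℝ :=
  Real.sqrt (12 / ((n : ℝ) ^ 2 - 1)) * (Qr n i σ - ((n : ℝ) + 1) / 2)


attribute [local instance] Classical.propDecidable

/-- `P` is a set partition of the (finite) index type `ι`: its blocks are nonempty and
every index lies in exactly one block. -/
def IsSetPartition {ι : Type*} [Fintype ι] (P : Finset (Finset ι)) : Prop :=
  (∀ A ∈ P, A.Nonempty) ∧ ∀ i : ι, ∃! A : Finset ι, A ∈ P ∧ i ∈ A

/-- A perfect matching: a set partition all of whose blocks have two elements. -/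
def IsPerfectMatching {ι : Type*} [Fintype ι] (P : Finset (Finset ι)) : Prop :=
  IsSetPartition P ∧ ∀ A ∈ P, A.card = 2

/-- The joint cumulant `C(ξ_1,…,ξ_N) = Σ_{π} (−1)^{#π−1}(#π−1)! Π_{A∈π} E[Π_{i∈A} ξ_i]`,
where the sum runs over all set partitions of the index set. -/
def jointCumulant {Ω : Type*} [MeasurableSpace Ω] (μ : Measure Ω)
    {ι : Type*} [Fintype ι] (ξ : ι → Ω → ℝ) : ℝ :=
  ∑ P ∈ Finset.univ.filter (fun P : Finset (Finset ι) => IsSetPartition P),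
    (-1 : ℝ) ^ (P.card - 1) * (Nat.factorial (P.card - 1) : ℝ) *
      ∏ A ∈ P, ∫ ω, (∏ i ∈ A, ξ i ω) ∂μ

/-- `E_σ(ξ) = Π_{A∈σ} E[Π_{i∈A} ξ_i]`. -/
def momProd {Ω : Type*} [MeasurableSpace Ω] (μ : Measure Ω)
    {ι : Type*} (P : Finset (Finset ι)) (ξ : ι → Ω → ℝ) : ℝ :=
  ∏ A ∈ P, ∫ ω, (∏ i ∈ A, ξ i ω) ∂μ

/-- `C_π(ξ) = Π_{A∈π} C({ξ_i}_{i∈A})`, the product over the blocks of `π` of the joint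
cumulants of the variables indexed by each block. -/
def cumProd {Ω : Type*} [MeasurableSpace Ω] (μ : Measure Ω)
    {ι : Type*} [Fintype ι] (P : Finset (Finset ι)) (ξ : ι → Ω → ℝ) : ℝ :=
  ∏ A ∈ P, jointCumulant μ (fun a : {x // x ∈ A} => ξ a.1)

/-- The relation generating the join `P ∨ Q` of two set partitions: the equivalence closure
of "lying in a common block of `P` or of `Q`". -/
def joinRel {ι : Type*} (P Q : Finset (Finset ι)) : ι → ι → Prop :=
  Relation.EqvGen fun a b => (∃ A ∈ P, a ∈ A ∧ b ∈ A) ∨ (∃ A ∈ Q, a ∈ A ∧ b ∈ A)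

/-- `B` is a block of the join `P ∨ Q`, i.e. an equivalence class of `joinRel P Q`. -/
def IsJoinBlock {ι : Type*} [Fintype ι] (P Q : Finset (Finset ι)) (B : Finset ι) : Prop :=
  ∃ a : ι, B = Finset.univ.filter (fun b => joinRel P Q a b)

/-- The set of blocks of the join `P ∨ Q`. -/
def joinBlocks {ι : Type*} [Fintype ι] (P Q : Finset (Finset ι)) : Finset (Finset ι) :=
  Finset.univ.filter (fun B : Finset ι => IsJoinBlock P Q B)

/-- `#(P ∨ Q)`, the number of blocks of the join of two set partitions. -/
def joinCard {ι : Type*} [Fintype ι] (P Q : Finset (Finset ι)) : ℕ :=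
  (joinBlocks P Q).card

/-- A word `j` is `π`-measurable if `j_α = j_β` whenever `α, β` lie in the same block. -/
def WordMeasurable {ι κ : Type*} (P : Finset (Finset ι)) (j : ι → κ) : Prop :=
  ∀ A ∈ P, ∀ a ∈ A, ∀ b ∈ A, j a = j b

section Aux

instance permMSC (n : ℕ) : MeasurableSingletonClass (Equiv.Perm (Fin n)) :=
  ⟨fun _ => MeasurableSpace.measurableSet_top⟩

lemma integral_perm (n : ℕ) (f : Equiv.Perm (Fin n) → ℝ) :
    ∫ σ, f σ ∂permMeasure n = (∑ σ, f σ) / (n.factorial : ℝ) := by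
  rw [permMeasure, MeasureTheory.integral_fintype MeasureTheory.Integrable.of_finite]
  have h : ∀ σ : Equiv.Perm (Fin n),
      ((PMF.uniformOfFintype (Equiv.Perm (Fin n))).toMeasure {σ}).toReal
        = (n.factorial : ℝ)⁻¹ := by
    intro σ
    rw [PMF.toMeasure_apply_singleton _ _ MeasurableSpace.measurableSet_top,
      PMF.uniformOfFintype_apply]
    simp [Fintype.card_perm]
  simp only [Measure.real, h, smul_eq_mul]
  rw [← Finset.mul_sum, inv_mul_eq_div]

lemma sum_mul_perm (n : ℕ) (f : Equiv.Perm (Fin n) → ℝ) (π : Equiv.Perm (Fin n)) :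
    ∑ σ, f (σ * π) = ∑ σ, f σ :=
  Equiv.sum_comp (Equiv.mulRight π) f

lemma Zr_mul (n : ℕ) (i : Fin n) (σ π : Equiv.Perm (Fin n)) :
    Zr n i (σ * π) = Zr n (π i) σ := by
  simp [Zr, Qr, Equiv.Perm.mul_apply]

lemma sum_Zr_pointwise (n : ℕ) (σ : Equiv.Perm (Fin n)) :
    ∑ i, Zr n i σ = 0 := by
  have h1 : ∑ i, Qr n i σ = ∑ i : Fin n, (((i : ℕ) : ℝ) + 1) := by
    unfold Qr
    exact Equiv.sum_comp σ (fun k : Fin n => (((k : ℕ) : ℝ) + 1))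
  have h2 : ∑ i : Fin n, (((i : ℕ) : ℝ) + 1) = n * (n + 1) / 2 := by
    clear h1 σ
    induction n with
    | zero => simp
    | succ m ih =>
      rw [Fin.sum_univ_castSucc]
      simp only [Fin.coe_castSucc, Fin.val_last]
      rw [ih]
      push_cast
      ring
  have h3 : ∑ i, (Qr n i σ - ((n : ℝ) + 1) / 2) = 0 := by
    rw [Finset.sum_sub_distrib, h1, h2, Finset.sum_const, Finset.card_univ, Fintype.card_fin]
    push_cast
    ring
  calc ∑ i, Zr n i σ
      = Real.sqrt (12 / ((n : ℝ) ^ 2 - 1)) * ∑ i, (Qr n i σ - ((n : ℝ) + 1) / 2) := by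
        rw [Finset.mul_sum]; rfl
    _ = 0 := by rw [h3, mul_zero]

lemma sum_Zr_eq (n : ℕ) (i i' : Fin n) :
    ∑ σ, Zr n i σ = ∑ σ, Zr n i' σ := by
  have h := sum_mul_perm n (Zr n i) (Equiv.swap i i')
  simp only [Zr_mul, Equiv.swap_apply_left] at h
  exact h.symm

lemma sum_Zr_zero (n : ℕ) (hn : 1 ≤ n) (i : Fin n) : ∑ σ, Zr n i σ = 0 := by
  have h : (n : ℝ) * ∑ σ, Zr n i σ = 0 := by
    calc (n : ℝ) * ∑ σ, Zr n i σ
        = ∑ _i' : Fin n, ∑ σ, Zr n i σ := by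
          rw [Finset.sum_const, Finset.card_univ, Fintype.card_fin, nsmul_eq_mul]
      _ = ∑ i' : Fin n, ∑ σ, Zr n i' σ :=
          Finset.sum_congr rfl fun i' _ => sum_Zr_eq n i i'
      _ = ∑ σ : Equiv.Perm (Fin n), ∑ i', Zr n i' σ := Finset.sum_comm
      _ = 0 := by simp [sum_Zr_pointwise]
  have hn' : (n : ℝ) ≠ 0 := by
    have : 0 < n := hn
    exact_mod_cast this.ne'
  exact (mul_eq_zero.mp h).resolve_left hn'

end Aux

section Aux2

lemma exists_perm_pair {n : ℕ} {i j i' j' : Fin n} (hij : i ≠ j) (hij' : i' ≠ j') :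
    ∃ π : Equiv.Perm (Fin n), π i = i' ∧ π j = j' := by
  refine ⟨Equiv.swap (Equiv.swap i i' j) j' * Equiv.swap i i', ?_, ?_⟩
  · rw [Equiv.Perm.mul_apply, Equiv.swap_apply_left]
    refine Equiv.swap_apply_of_ne_of_ne ?_ hij'
    intro h
    apply hij
    have h2 := congrArg (Equiv.swap i i') h
    rw [Equiv.swap_apply_right, Equiv.swap_apply_self] at h2
    exact h2
  · rw [Equiv.Perm.mul_apply, Equiv.swap_apply_left]

lemma sum_ZZ_eq (n : ℕ) {i j i' j' : Fin n} (hij : i ≠ j) (hij' : i' ≠ j') :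
    ∑ σ, Zr n i σ * Zr n j σ = ∑ σ, Zr n i' σ * Zr n j' σ := by
  obtain ⟨π, hπi, hπj⟩ := exists_perm_pair hij hij'
  have h := sum_mul_perm n (fun σ => Zr n i σ * Zr n j σ) π
  simp only [Zr_mul, hπi, hπj] at h
  exact h.symm

lemma sum_ZZ_offdiag (n : ℕ) {i j : Fin n} (hij : i ≠ j) :
    ((n : ℝ) - 1) * ∑ σ, Zr n i σ * Zr n j σ = - ∑ σ, Zr n i σ * Zr n i σ := by
  have key : ∑ j' : Fin n, ∑ σ, Zr n i σ * Zr n j' σ = 0 := by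
    rw [Finset.sum_comm]
    refine Finset.sum_eq_zero fun σ _ => ?_
    rw [← Finset.mul_sum, sum_Zr_pointwise, mul_zero]
  have split : ∑ j' : Fin n, ∑ σ, Zr n i σ * Zr n j' σ
      = (∑ σ, Zr n i σ * Zr n i σ)
        + ∑ j' ∈ Finset.univ.erase i, ∑ σ, Zr n i σ * Zr n j' σ :=
    (Finset.add_sum_erase _ _ (Finset.mem_univ i)).symm
  have hconst : ∀ j' ∈ Finset.univ.erase i,
      (∑ σ, Zr n i σ * Zr n j' σ) = ∑ σ, Zr n i σ * Zr n j σ := fun j' hj' =>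
    sum_ZZ_eq n (Ne.symm (Finset.mem_erase.mp hj').1) hij
  rw [split, Finset.sum_congr rfl hconst, Finset.sum_const,
    Finset.card_erase_of_mem (Finset.mem_univ i), Finset.card_univ, Fintype.card_fin,
    nsmul_eq_mul] at key
  have hn1 : 1 ≤ n := by
    rcases Nat.eq_zero_or_pos n with h | h
    · subst h; exact i.elim0
    · exact h
  have hc : ((n - 1 : ℕ) : ℝ) = (n : ℝ) - 1 := by
    push_cast [Nat.cast_sub hn1]
    ring
  rw [hc] at key
  linarith

lemma Zr_abs_le (n : ℕ) (hn : 2 ≤ n) (i : Fin n) (σ : Equiv.Perm (Fin n)) :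
    |Zr n i σ| ≤ 5 := by
  have hn' : (2 : ℝ) ≤ (n : ℝ) := by exact_mod_cast hn
  have h1 : Real.sqrt (12 / ((n : ℝ) ^ 2 - 1)) ≤ 5 / n := by
    have h5 : (5 / (n : ℝ)) = Real.sqrt ((5 / n) ^ 2) :=
      (Real.sqrt_sq (by positivity)).symm
    rw [h5]
    apply Real.sqrt_le_sqrt
    rw [div_pow, div_le_div_iff₀ (by nlinarith) (by positivity)]
    nlinarith
  have hq1 : (1 : ℝ) ≤ Qr n i σ := by
    unfold Qr
    have : (0 : ℝ) ≤ ((σ i : ℕ) : ℝ) := by positivity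
    linarith
  have hq2 : Qr n i σ ≤ n := by
    unfold Qr
    have h := (σ i).isLt
    have : ((σ i : ℕ) : ℝ) + 1 ≤ (n : ℝ) := by exact_mod_cast h
    linarith
  have h2 : |Qr n i σ - ((n : ℝ) + 1) / 2| ≤ n := by
    rw [abs_le]
    constructor <;> nlinarith
  calc |Zr n i σ| = Real.sqrt (12 / ((n : ℝ) ^ 2 - 1)) * |Qr n i σ - ((n : ℝ) + 1) / 2| := by
        rw [Zr, abs_mul, abs_of_nonneg (Real.sqrt_nonneg _)]
    _ ≤ (5 / n) * n := mul_le_mul h1 h2 (abs_nonneg _) (by positivity)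
    _ = 5 := by field_simp

lemma sum_ZZ_abs_le (n : ℕ) (hn : 2 ≤ n) (p q : Fin n) :
    |∑ σ, Zr n p σ * Zr n q σ| ≤ 25 * (n.factorial : ℝ) := by
  calc |∑ σ, Zr n p σ * Zr n q σ| ≤ ∑ σ, |Zr n p σ * Zr n q σ| :=
        Finset.abs_sum_le_sum_abs _ _
    _ ≤ ∑ _σ : Equiv.Perm (Fin n), (25 : ℝ) := by
        refine Finset.sum_le_sum fun σ _ => ?_
        rw [abs_mul]
        have h1 := Zr_abs_le n hn p σ
        have h2 := Zr_abs_le n hn q σ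
        nlinarith [abs_nonneg (Zr n p σ), abs_nonneg (Zr n q σ)]
    _ = 25 * (n.factorial : ℝ) := by
        rw [Finset.sum_const, Finset.card_univ, Fintype.card_perm, Fintype.card_fin,
          nsmul_eq_mul]
        ring

lemma cov_abs_le (n : ℕ) (hn : 2 ≤ n) (p q : Fin n) :
    |∫ σ, Zr n p σ * Zr n q σ ∂permMeasure n| ≤ 25 := by
  rw [integral_perm, abs_div]
  have hfac : (0 : ℝ) < (n.factorial : ℝ) := by positivity
  rw [abs_of_pos hfac, div_le_iff₀ hfac]
  calc |∑ σ, Zr n p σ * Zr n q σ| ≤ 25 * (n.factorial : ℝ) := sum_ZZ_abs_le n hn p q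
    _ = 25 * (n.factorial : ℝ) := rfl

lemma cov_abs_le_ne (n : ℕ) (hn : 2 ≤ n) {p q : Fin n} (hpq : p ≠ q) :
    |∫ σ, Zr n p σ * Zr n q σ ∂permMeasure n| ≤ 50 / n := by
  rw [integral_perm, abs_div]
  have hfac : (0 : ℝ) < (n.factorial : ℝ) := by positivity
  have hn' : (2 : ℝ) ≤ (n : ℝ) := by exact_mod_cast hn
  have hkey := sum_ZZ_offdiag n hpq
  have hT := sum_ZZ_abs_le n hn p p
  have hS : |∑ σ, Zr n p σ * Zr n q σ| ≤ 25 * (n.factorial : ℝ) / ((n : ℝ) - 1) := by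
    rw [le_div_iff₀ (by linarith)]
    calc |∑ σ, Zr n p σ * Zr n q σ| * ((n : ℝ) - 1)
        = |((n : ℝ) - 1) * ∑ σ, Zr n p σ * Zr n q σ| := by
          rw [abs_mul, abs_of_nonneg (by linarith : (0:ℝ) ≤ (n:ℝ) - 1)]; ring
      _ = |∑ σ, Zr n p σ * Zr n p σ| := by rw [hkey, abs_neg]
      _ ≤ 25 * (n.factorial : ℝ) := hT
  rw [abs_of_pos hfac, div_le_div_iff₀ hfac (by linarith : (0:ℝ) < (n:ℝ))]
  calc |∑ σ, Zr n p σ * Zr n q σ| * (n : ℝ)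
      ≤ (25 * (n.factorial : ℝ) / ((n : ℝ) - 1)) * (n : ℝ) := by
        apply mul_le_mul_of_nonneg_right hS (by linarith)
    _ ≤ 50 * (n.factorial : ℝ) := by
        rw [div_mul_eq_mul_div, div_le_iff₀ (by linarith : (0:ℝ) < (n:ℝ) - 1)]
        nlinarith
  -- goal shape check

end Aux2

section Aux3

lemma partitions_pair {ι : Type*} [Fintype ι] (a b : ι) (hab : a ≠ b)
    (huniv : (Finset.univ : Finset ι) = {a, b}) :
    Finset.univ.filter (fun P : Finset (Finset ι) => IsSetPartition P)
      = {({({a, b} : Finset ι)} : Finset (Finset ι)),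
         ({({a} : Finset ι), ({b} : Finset ι)} : Finset (Finset ι))} := by
  have hmem : ∀ x : ι, x = a ∨ x = b := fun x => by
    have hx : x ∈ ({a, b} : Finset ι) := huniv ▸ Finset.mem_univ x
    simpa using hx
  ext P
  simp only [Finset.mem_filter, Finset.mem_univ, true_and, Finset.mem_insert,
    Finset.mem_singleton]
  constructor
  · rintro ⟨hne, huniq⟩
    obtain ⟨Aa, ⟨hAaP, haAa⟩, hAa_uniq⟩ := huniq a
    obtain ⟨Ab, ⟨hAbP, hbAb⟩, hAb_uniq⟩ := huniq b
    by_cases hb : b ∈ Aa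
    · left
      have hAaeq : Aa = {a, b} := by
        apply Finset.Subset.antisymm
        · intro x hx
          rcases hmem x with rfl | rfl
          · exact Finset.mem_insert_self _ _
          · simp
        · intro x hx
          rcases Finset.mem_insert.mp hx with rfl | hx
          · exact haAa
          · rw [Finset.mem_singleton] at hx
            subst hx; exact hb
      have hPeq : P = {Aa} := by
        apply Finset.Subset.antisymm
        · intro B hB
          obtain ⟨z, hz⟩ := hne B hB
          rw [Finset.mem_singleton]
          rcases hmem z with rfl | rfl
          · exact hAa_uniq B ⟨hB, hz⟩
          · exact (hAb_uniq B ⟨hB, hz⟩).trans (hAb_uniq Aa ⟨hAaP, hb⟩).symm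
        · intro B hB
          rw [Finset.mem_singleton] at hB
          subst hB; exact hAaP
      rw [hPeq, hAaeq]
    · right
      have hAa_eq : Aa = {a} := by
        apply Finset.Subset.antisymm
        · intro x hx
          rcases hmem x with rfl | rfl
          · exact Finset.mem_singleton_self _
          · exact absurd hx hb
        · intro x hx
          rw [Finset.mem_singleton] at hx; subst hx; exact haAa
      have haAb : a ∉ Ab := by
        intro h
        have hEq : Ab = Aa := hAa_uniq Ab ⟨hAbP, h⟩
        exact hb (hEq ▸ hbAb)
      have hAb_eq : Ab = {b} := by
        apply Finset.Subset.antisymm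
        · intro x hx
          rcases hmem x with rfl | rfl
          · exact absurd hx haAb
          · exact Finset.mem_singleton_self _
        · intro x hx
          rw [Finset.mem_singleton] at hx; subst hx; exact hbAb
      apply Finset.Subset.antisymm
      · intro B hB
        obtain ⟨z, hz⟩ := hne B hB
        rcases hmem z with rfl | rfl
        · have hEq : B = Aa := hAa_uniq B ⟨hB, hz⟩
          simp [hEq, hAa_eq]
        · have hEq : B = Ab := hAb_uniq B ⟨hB, hz⟩
          simp [hEq, hAb_eq]
      · intro B hB
        rcases Finset.mem_insert.mp hB with rfl | hB
        · exact hAa_eq ▸ hAaP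
        · rw [Finset.mem_singleton] at hB
          subst hB; exact hAb_eq ▸ hAbP
  · rintro (rfl | rfl)
    · constructor
      · intro A hA
        rw [Finset.mem_singleton] at hA; subst hA
        exact ⟨a, Finset.mem_insert_self _ _⟩
      · intro i
        refine ⟨{a, b}, ⟨Finset.mem_singleton_self _, ?_⟩, ?_⟩
        · rcases hmem i with rfl | rfl <;> simp
        · rintro B ⟨hB, _⟩
          rwa [Finset.mem_singleton] at hB
    · constructor
      · intro A hA
        rcases Finset.mem_insert.mp hA with rfl | hA
        · exact ⟨a, Finset.mem_singleton_self a⟩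
        · rw [Finset.mem_singleton] at hA; subst hA
          exact ⟨b, Finset.mem_singleton_self b⟩
      · intro i
        rcases hmem i with rfl | rfl
        · refine ⟨{i}, ⟨Finset.mem_insert_self _ _, Finset.mem_singleton_self _⟩, ?_⟩
          rintro B ⟨hB, haB⟩
          rcases Finset.mem_insert.mp hB with rfl | hB
          · rfl
          · rw [Finset.mem_singleton] at hB; subst hB
            rw [Finset.mem_singleton] at haB
            exact absurd haB hab
        · refine ⟨{i}, ⟨Finset.mem_insert_of_mem (Finset.mem_singleton_self _),
            Finset.mem_singleton_self _⟩, ?_⟩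
          rintro B ⟨hB, hbB⟩
          rcases Finset.mem_insert.mp hB with rfl | hB
          · rw [Finset.mem_singleton] at hbB
            exact absurd hbB.symm hab
          · rwa [Finset.mem_singleton] at hB

lemma jointCumulant_pair {Ω : Type*} [MeasurableSpace Ω] (μ : MeasureTheory.Measure Ω)
    {ι : Type*} [Fintype ι] (a b : ι) (hab : a ≠ b)
    (huniv : (Finset.univ : Finset ι) = {a, b}) (ξ : ι → Ω → ℝ) :
    jointCumulant μ ξ
      = (∫ ω, ξ a ω * ξ b ω ∂μ) - (∫ ω, ξ a ω ∂μ) * ∫ ω, ξ b ω ∂μ := by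
  have hAB : ({a} : Finset ι) ≠ {b} := fun h => hab (Finset.singleton_injective h)
  have hne : ({({a, b} : Finset ι)} : Finset (Finset ι))
      ≠ {({a} : Finset ι), ({b} : Finset ι)} := by
    intro h
    have hcard := congrArg Finset.card h
    rw [Finset.card_singleton, Finset.card_pair hAB] at hcard
    omega
  unfold jointCumulant
  rw [partitions_pair a b hab huniv, Finset.sum_pair hne,
    Finset.prod_singleton, Finset.prod_pair hAB, Finset.card_singleton,
    Finset.card_pair hAB]
  simp only [Finset.prod_singleton, Finset.prod_pair hab]
  norm_num
  ring

lemma jointCumulant_block {Ω : Type*} [MeasurableSpace Ω] (μ : MeasureTheory.Measure Ω)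
    {m : ℕ} {A : Finset (Fin m)} {x y : Fin m} (hxy : x ≠ y) (hA : A = {x, y})
    (g : Fin m → Ω → ℝ) :
    jointCumulant μ (fun a : {z // z ∈ A} => g a.1)
      = (∫ ω, g x ω * g y ω ∂μ) - (∫ ω, g x ω ∂μ) * ∫ ω, g y ω ∂μ := by
  have hx : x ∈ A := by rw [hA]; exact Finset.mem_insert_self _ _
  have hy : y ∈ A := by rw [hA]; exact Finset.mem_insert_of_mem (Finset.mem_singleton_self _)
  have hab : (⟨x, hx⟩ : {z // z ∈ A}) ≠ ⟨y, hy⟩ := by simpa using hxy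
  refine jointCumulant_pair μ _ _ hab ?_ _
  ext ⟨z, hz⟩
  simp only [Finset.mem_univ, true_iff, Finset.mem_insert, Finset.mem_singleton,
    Subtype.mk.injEq]
  rw [hA] at hz
  simpa using hz

lemma integral_Zr (n : ℕ) (hn : 1 ≤ n) (p : Fin n) :
    ∫ σ, Zr n p σ ∂permMeasure n = 0 := by
  rw [integral_perm, sum_Zr_zero n hn, zero_div]

lemma block_bound (n : ℕ) (hn : 2 ≤ n) {m : ℕ} {A : Finset (Fin m)} {x y : Fin m}
    (hxy : x ≠ y) (hA : A = {x, y}) (j : Fin m → Fin n) :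
    |jointCumulant (permMeasure n) (fun a : {z // z ∈ A} => Zr n (j a.1))| ≤ 50 ∧
    (j x ≠ j y →
      |jointCumulant (permMeasure n) (fun a : {z // z ∈ A} => Zr n (j a.1))| ≤ 50 / n) := by
  have hcum : jointCumulant (permMeasure n) (fun a : {z // z ∈ A} => Zr n (j a.1))
      = ∫ σ, Zr n (j x) σ * Zr n (j y) σ ∂permMeasure n := by
    rw [jointCumulant_block (permMeasure n) hxy hA (fun p => Zr n (j p)),
      integral_Zr n (by omega), zero_mul, sub_zero]
  rw [hcum]
  exact ⟨le_trans (cov_abs_le n hn _ _) (by norm_num),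
    fun hne => cov_abs_le_ne n hn hne⟩

end Aux3

section Aux4

lemma block_eq_block {ι : Type*} [Fintype ι] {P : Finset (Finset ι)}
    (hP : IsSetPartition P) {A B : Finset ι} {z : ι} (hA : A ∈ P) (hB : B ∈ P)
    (hzA : z ∈ A) (hzB : z ∈ B) : A = B := by
  obtain ⟨U, _, hUuniq⟩ := hP.2 z
  exact (hUuniq A ⟨hA, hzA⟩).trans (hUuniq B ⟨hB, hzB⟩).symm

lemma sum_inter_card {ι : Type*} [Fintype ι] [DecidableEq ι] {P : Finset (Finset ι)}
    (hP : IsSetPartition P) (T : Finset ι) :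
    ∑ A ∈ P, (A ∩ T).card = T.card := by
  have hdisj : ∀ A ∈ P, ∀ B ∈ P, A ≠ B → Disjoint (A ∩ T) (B ∩ T) := by
    intro A hA B hB hAB
    rw [Finset.disjoint_left]
    intro z hzA hzB
    exact hAB (block_eq_block hP hA hB (Finset.mem_inter.mp hzA).1
      (Finset.mem_inter.mp hzB).1)
  rw [← Finset.card_biUnion hdisj]
  congr 1
  ext z
  simp only [Finset.mem_biUnion, Finset.mem_inter]
  constructor
  · rintro ⟨A, _, _, hz⟩; exact hz
  · intro hz
    obtain ⟨A, ⟨hA, hzA⟩, _⟩ := hP.2 z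
    exact ⟨A, hA, hzA, hz⟩

lemma rel_of_joinCard_one {ι : Type*} [Fintype ι] {P Q : Finset (Finset ι)}
    (h : joinCard P Q = 1) (a b : ι) : joinRel P Q a b := by
  by_contra hab
  have hA : Finset.univ.filter (joinRel P Q a) ∈ joinBlocks P Q :=
    Finset.mem_filter.mpr ⟨Finset.mem_univ _, ⟨a, rfl⟩⟩
  have hB : Finset.univ.filter (joinRel P Q b) ∈ joinBlocks P Q :=
    Finset.mem_filter.mpr ⟨Finset.mem_univ _, ⟨b, rfl⟩⟩
  have hne : Finset.univ.filter (joinRel P Q a) ≠ Finset.univ.filter (joinRel P Q b) := by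
    intro hEq
    have hbmem : b ∈ Finset.univ.filter (joinRel P Q b) :=
      Finset.mem_filter.mpr ⟨Finset.mem_univ _, Relation.EqvGen.refl b⟩
    rw [← hEq, Finset.mem_filter] at hbmem
    exact hab hbmem.2
  have : 1 < (joinBlocks P Q).card :=
    Finset.one_lt_card.mpr ⟨_, hA, _, hB, hne⟩
  rw [joinCard] at h
  omega

lemma bad_card_ge {m : ℕ} {σ₀ σP : Finset (Finset (Fin m))}
    (hσ₀ : IsPerfectMatching σ₀) (hσ : IsPerfectMatching σP)
    (hjoin : joinCard σP σ₀ = 1) {n : ℕ} {j : Fin m → Fin n}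
    (hmeas : WordMeasurable σP j) (hd : 2 ≤ (Finset.univ.image j).card) :
    (Finset.univ.image j).card
      ≤ (σ₀.filter (fun A => ∃ u ∈ A, ∃ v ∈ A, j u ≠ j v)).card := by
  classical
  set img := Finset.univ.image j with himg
  set S : Fin n → Finset (Fin m) := fun c => Finset.univ.filter (fun z => j z = c) with hS
  set deg : Fin n → ℕ := fun c => (σ₀.filter (fun A => (A ∩ S c).card = 1)).card with hdeg
  set Bad := σ₀.filter (fun A => ∃ u ∈ A, ∃ v ∈ A, j u ≠ j v) with hBad
  -- each color class has even size
  have hSeven : ∀ c, Even (S c).card := by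
    intro c
    rw [← sum_inter_card hσ.1 (S c)]
    refine Finset.sum_induction _ Even (fun _ _ => Even.add) Even.zero ?_
    intro A hA
    obtain ⟨u, v, huv, hAuv⟩ := Finset.card_eq_two.mp (hσ.2 A hA)
    have hjuv : j u = j v := hmeas A hA u (by rw [hAuv]; simp) v (by rw [hAuv]; simp)
    by_cases hc : j u = c
    · have : A ∩ S c = A := by
        rw [Finset.inter_eq_left]
        intro z hz
        rw [hAuv] at hz
        rcases Finset.mem_insert.mp hz with rfl | hz
        · exact Finset.mem_filter.mpr ⟨Finset.mem_univ _, hc⟩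
        · rw [Finset.mem_singleton] at hz; subst hz
          exact Finset.mem_filter.mpr ⟨Finset.mem_univ _, hjuv ▸ hc⟩
      rw [this, hσ.2 A hA]
      exact ⟨1, rfl⟩
    · have : A ∩ S c = ∅ := by
        rw [Finset.eq_empty_iff_forall_notMem]
        intro z hz
        obtain ⟨hzA, hzS⟩ := Finset.mem_inter.mp hz
        have hjz : j z = c := (Finset.mem_filter.mp hzS).2
        rw [hAuv] at hzA
        rcases Finset.mem_insert.mp hzA with rfl | hzA
        · exact hc hjz
        · rw [Finset.mem_singleton] at hzA; subst hzA
          exact hc (hjuv.trans hjz)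
      rw [this]
      simp
  -- each degree is even
  have hdegeven : ∀ c, Even (deg c) := by
    intro c
    have h1 : ∑ A ∈ σ₀, (A ∩ S c).card = (S c).card := sum_inter_card hσ₀.1 (S c)
    have h2 : ∑ A ∈ σ₀, (A ∩ S c).card
        = ∑ A ∈ σ₀.filter (fun A => (A ∩ S c).card = 1), (A ∩ S c).card
          + ∑ A ∈ σ₀.filter (fun A => ¬ (A ∩ S c).card = 1), (A ∩ S c).card :=
      (Finset.sum_filter_add_sum_filter_not _ _ _).symm
    have h3 : ∑ A ∈ σ₀.filter (fun A => (A ∩ S c).card = 1), (A ∩ S c).card = deg c := by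
      simp only [hdeg]
      rw [Finset.sum_congr rfl (fun A hA => (Finset.mem_filter.mp hA).2)]
      simp
    have h4 : Even (∑ A ∈ σ₀.filter (fun A => ¬ (A ∩ S c).card = 1), (A ∩ S c).card) := by
      refine Finset.sum_induction _ Even (fun _ _ => Even.add) Even.zero ?_
      intro A hA
      obtain ⟨hAσ, hne1⟩ := Finset.mem_filter.mp hA
      have hle : (A ∩ S c).card ≤ 2 := by
        calc (A ∩ S c).card ≤ A.card := Finset.card_le_card (Finset.inter_subset_left)
          _ = 2 := hσ₀.2 A hAσ
      interval_cases h : (A ∩ S c).card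
      · exact Even.zero
      · exact absurd rfl hne1
      · exact ⟨1, rfl⟩
    have := hSeven c
    rw [← h1, h2, h3] at this
    rcases Nat.even_add.mp this with h
    exact h.mpr h4
  -- each degree is positive
  have hdegpos : ∀ c ∈ img, deg c ≠ 0 := by
    intro c hc hzero
    have hnone : ∀ A ∈ σ₀, (A ∩ S c).card ≠ 1 := by
      intro A hA h1
      have : A ∈ σ₀.filter (fun A => (A ∩ S c).card = 1) := Finset.mem_filter.mpr ⟨hA, h1⟩
      simp only [hdeg] at hzero
      rw [Finset.card_eq_zero.mp hzero] at this
      exact Finset.notMem_empty _ this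
    -- invariant under joinRel
    have hinv : ∀ p q, joinRel σP σ₀ p q → (j p = c ↔ j q = c) := by
      intro p q hrel
      induction hrel with
      | rel p q hpq =>
        rcases hpq with ⟨A, hA, hpA, hqA⟩ | ⟨A, hA, hpA, hqA⟩
        · rw [hmeas A hA p hpA q hqA]
        · by_cases hpq' : p = q
          · rw [hpq']
          · have hAeq : A = {p, q} := by
              refine (Finset.eq_of_subset_of_card_le ?_ ?_).symm
              · intro z hz
                rcases Finset.mem_insert.mp hz with rfl | hz
                · exact hpA
                · rw [Finset.mem_singleton] at hz; subst hz; exact hqA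
              · rw [hσ₀.2 A hA, Finset.card_pair hpq']
            constructor
            · intro hp
              by_contra hq
              apply hnone A hA
              have : A ∩ S c = {p} := by
                ext z
                simp only [Finset.mem_inter, Finset.mem_singleton, hAeq, hS,
                  Finset.mem_filter, Finset.mem_univ, true_and, Finset.mem_insert]
                constructor
                · rintro ⟨rfl | rfl, hjz⟩
                  · rfl
                  · exact absurd hjz hq
                · rintro rfl
                  exact ⟨Or.inl rfl, hp⟩
              rw [this, Finset.card_singleton]
            · intro hq
              by_contra hp
              apply hnone A hA
              have : A ∩ S c = {q} := by
                ext z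
                simp only [Finset.mem_inter, Finset.mem_singleton, hAeq, hS,
                  Finset.mem_filter, Finset.mem_univ, true_and, Finset.mem_insert]
                constructor
                · rintro ⟨rfl | rfl, hjz⟩
                  · exact absurd hjz hp
                  · rfl
                · rintro rfl
                  exact ⟨Or.inr rfl, hq⟩
              rw [this, Finset.card_singleton]
      | refl => exact Iff.rfl
      | symm _ _ _ ih => exact ih.symm
      | trans _ _ _ _ _ ih1 ih2 => exact ih1.trans ih2
    obtain ⟨u, _, hu⟩ := Finset.mem_image.mp hc
    obtain ⟨c', hc', hcc'⟩ := Finset.exists_mem_ne hd c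
    obtain ⟨v, _, hv⟩ := Finset.mem_image.mp hc'
    have hrel : joinRel σP σ₀ u v := rel_of_joinCard_one hjoin u v
    exact hcc' (hv ▸ (hinv u v hrel).mp hu)
  -- sum of degrees
  have hdegsum : ∑ c ∈ img, deg c = 2 * Bad.card := by
    have h1 : ∀ c, deg c = ∑ A ∈ σ₀, if (A ∩ S c).card = 1 then 1 else 0 := by
      intro c; simp only [hdeg]; rw [Finset.card_filter]
    rw [Finset.sum_congr rfl (fun c _ => h1 c), Finset.sum_comm]
    have h2 : ∀ A ∈ σ₀,
        (∑ c ∈ img, if (A ∩ S c).card = 1 then 1 else 0)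
          = if (∃ u ∈ A, ∃ v ∈ A, j u ≠ j v) then 2 else 0 := by
      intro A hA
      obtain ⟨u, v, huv, hAuv⟩ := Finset.card_eq_two.mp (hσ₀.2 A hA)
      have huA : u ∈ A := by rw [hAuv]; simp
      have hvA : v ∈ A := by rw [hAuv]; simp
      by_cases hjuv : j u = j v
      · have hno : ∀ z ∈ A, ∀ w ∈ A, j z = j w := by
          intro z hz w hw
          rw [hAuv] at hz hw
          rcases Finset.mem_insert.mp hz with rfl | hz
          · rcases Finset.mem_insert.mp hw with rfl | hw
            · rfl
            · rw [Finset.mem_singleton] at hw; subst hw; exact hjuv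
          · rw [Finset.mem_singleton] at hz; subst hz
            rcases Finset.mem_insert.mp hw with rfl | hw
            · exact hjuv.symm
            · rw [Finset.mem_singleton] at hw; subst hw; rfl
        rw [if_neg (by push_neg; exact hno)]
        refine Finset.sum_eq_zero fun c _ => ?_
        rw [if_neg]
        intro h1c
        obtain ⟨z, hz⟩ := Finset.card_eq_one.mp h1c
        have hzA : z ∈ A ∩ S c := hz ▸ Finset.mem_singleton_self z
        obtain ⟨hzA', hzS⟩ := Finset.mem_inter.mp hzA
        have hjz : j z = c := (Finset.mem_filter.mp hzS).2
        -- then both u, v in A ∩ S c, contradicting card 1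
        have huin : u ∈ A ∩ S c := Finset.mem_inter.mpr
          ⟨huA, Finset.mem_filter.mpr ⟨Finset.mem_univ _, (hno u huA z hzA').trans hjz⟩⟩
        have hvin : v ∈ A ∩ S c := Finset.mem_inter.mpr
          ⟨hvA, Finset.mem_filter.mpr ⟨Finset.mem_univ _, (hno v hvA z hzA').trans hjz⟩⟩
        rw [hz, Finset.mem_singleton] at huin hvin
        exact huv (huin.trans hvin.symm)
      · rw [if_pos ⟨u, huA, v, hvA, hjuv⟩]
        have hfilter : img.filter (fun c => (A ∩ S c).card = 1) = {j u, j v} := by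
          ext c
          simp only [Finset.mem_filter, Finset.mem_insert, Finset.mem_singleton]
          constructor
          · rintro ⟨-, h1c⟩
            obtain ⟨z, hz⟩ := Finset.card_eq_one.mp h1c
            have hzA : z ∈ A ∩ S c := hz ▸ Finset.mem_singleton_self z
            obtain ⟨hzA', hzS⟩ := Finset.mem_inter.mp hzA
            have hjz : j z = c := (Finset.mem_filter.mp hzS).2
            rw [hAuv] at hzA'
            rcases Finset.mem_insert.mp hzA' with rfl | hzA'
            · exact Or.inl hjz.symm
            · rw [Finset.mem_singleton] at hzA'; subst hzA'
              exact Or.inr hjz.symm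
          · intro hcuv
            have hmemimg : c ∈ img := by
              rcases hcuv with rfl | rfl
              · exact Finset.mem_image_of_mem j (Finset.mem_univ u)
              · exact Finset.mem_image_of_mem j (Finset.mem_univ v)
            refine ⟨hmemimg, ?_⟩
            rcases hcuv with rfl | rfl
            · have : A ∩ S (j u) = {u} := by
                ext z
                simp only [Finset.mem_inter, Finset.mem_singleton, hAuv, hS,
                  Finset.mem_filter, Finset.mem_univ, true_and, Finset.mem_insert]
                constructor
                · rintro ⟨rfl | rfl, hjz⟩
                  · rfl
                  · exact absurd hjz.symm hjuv
                · rintro rfl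
                  exact ⟨Or.inl rfl, rfl⟩
              rw [this, Finset.card_singleton]
            · have : A ∩ S (j v) = {v} := by
                ext z
                simp only [Finset.mem_inter, Finset.mem_singleton, hAuv, hS,
                  Finset.mem_filter, Finset.mem_univ, true_and, Finset.mem_insert]
                constructor
                · rintro ⟨rfl | rfl, hjz⟩
                  · exact absurd hjz hjuv
                  · rfl
                · rintro rfl
                  exact ⟨Or.inr rfl, rfl⟩
              rw [this, Finset.card_singleton]
        calc (∑ c ∈ img, if (A ∩ S c).card = 1 then 1 else 0)
            = (img.filter (fun c => (A ∩ S c).card = 1)).card := by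
              rw [Finset.card_filter]
          _ = 2 := by rw [hfilter, Finset.card_pair (by simpa using hjuv)]
    rw [Finset.sum_congr rfl h2, ← Finset.sum_filter, ← hBad, Finset.sum_const,
      smul_eq_mul, mul_comm]
  -- conclude
  have hdeg2 : ∀ c ∈ img, 2 ≤ deg c := by
    intro c hc
    obtain ⟨k, hk⟩ := hdegeven c
    have := hdegpos c hc
    omega
  have hsum_ge : 2 * img.card ≤ ∑ c ∈ img, deg c := by
    calc 2 * img.card = ∑ _c ∈ img, 2 := by rw [Finset.sum_const, smul_eq_mul, mul_comm]
      _ ≤ ∑ c ∈ img, deg c := Finset.sum_le_sum hdeg2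
  rw [hdegsum] at hsum_ge
  omega

end Aux4


/-- Bound on a single cycle: if `σ_0, σ` are perfect matchings of `{1,…,2ℓ}` with
`#(σ ∨ σ_0) = 1`, then there is a constant `C` such that for all `n ≥ 2` and every
`σ`-measurable word `j`, the product `C_{σ_0}(j) = Π_{{a,b}∈σ_0} C(Z_{j_a},Z_{j_b})`
satisfies `|C_{σ_0}(j)| ≤ C·n^{−d(j)}` when `d(j) ≥ 2` and `|C_{σ_0}(j)| ≤ C` when
`d(j) = 1`, where `d(j)` is the number of distinct values among the `j_α`. -/
theorem spearman_cycle_bound (ℓ : ℕ) (hℓ : 0 < ℓ)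
    (σ₀ σ : Finset (Finset (Fin (2 * ℓ))))
    (hσ₀ : IsPerfectMatching σ₀) (hσ : IsPerfectMatching σ)
    (hjoin : joinCard σ σ₀ = 1) :
    ∃ C : ℝ, ∀ n : ℕ, 2 ≤ n → ∀ j : Fin (2 * ℓ) → Fin n, WordMeasurable σ j →
      (2 ≤ (Finset.univ.image j).card →
        |cumProd (permMeasure n) σ₀ (fun a => Zr n (j a))| ≤
          C * (n : ℝ) ^ (-((Finset.univ.image j).card : ℤ))) ∧
      ((Finset.univ.image j).card = 1 →
        |cumProd (permMeasure n) σ₀ (fun a => Zr n (j a))| ≤ C) := by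
  refine ⟨50 ^ σ₀.card, fun n hn j hmeas => ?_⟩
  have hn0 : (0 : ℝ) < (n : ℝ) := by
    have : 0 < n := by omega
    exact_mod_cast this
  have habs : |cumProd (permMeasure n) σ₀ (fun a => Zr n (j a))|
      = ∏ A ∈ σ₀,
          |jointCumulant (permMeasure n) (fun a : {x // x ∈ A} => Zr n (j a.1))| := by
    rw [cumProd, Finset.abs_prod]
  have hbound : ∀ A ∈ σ₀,
      |jointCumulant (permMeasure n) (fun a : {x // x ∈ A} => Zr n (j a.1))|
        ≤ 50 * (if ∃ u ∈ A, ∃ v ∈ A, j u ≠ j v then (n : ℝ)⁻¹ else 1) := by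
    intro A hA
    obtain ⟨x, y, hxy, hAxy⟩ := Finset.card_eq_two.mp (hσ₀.2 A hA)
    have hb := block_bound n hn hxy hAxy j
    by_cases hpred : ∃ u ∈ A, ∃ v ∈ A, j u ≠ j v
    · rw [if_pos hpred]
      have hjxy : j x ≠ j y := by
        intro heq
        obtain ⟨u, hu, v, hv, huv⟩ := hpred
        rw [hAxy] at hu hv
        apply huv
        rcases Finset.mem_insert.mp hu with rfl | hu
        · rcases Finset.mem_insert.mp hv with rfl | hv
          · rfl
          · rw [Finset.mem_singleton] at hv; subst hv; exact heq
        · rw [Finset.mem_singleton] at hu; subst hu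
          rcases Finset.mem_insert.mp hv with rfl | hv
          · exact heq.symm
          · rw [Finset.mem_singleton] at hv; subst hv; rfl
      calc |jointCumulant (permMeasure n) (fun a : {x // x ∈ A} => Zr n (j a.1))|
          ≤ 50 / n := hb.2 hjxy
        _ = 50 * (n : ℝ)⁻¹ := by rw [div_eq_mul_inv]
    · rw [if_neg hpred, mul_one]
      exact hb.1
  have hprod_le : |cumProd (permMeasure n) σ₀ (fun a => Zr n (j a))|
      ≤ ∏ A ∈ σ₀, (50 * (if ∃ u ∈ A, ∃ v ∈ A, j u ≠ j v then (n : ℝ)⁻¹ else 1)) := by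
    rw [habs]
    exact Finset.prod_le_prod (fun A _ => abs_nonneg _) hbound
  have hprod_eq : ∏ A ∈ σ₀, ((50 : ℝ) * (if ∃ u ∈ A, ∃ v ∈ A, j u ≠ j v then (n : ℝ)⁻¹ else 1))
      = 50 ^ σ₀.card *
        ((n : ℝ)⁻¹) ^ (σ₀.filter (fun A => ∃ u ∈ A, ∃ v ∈ A, j u ≠ j v)).card := by
    rw [Finset.prod_mul_distrib, Finset.prod_const, Finset.prod_ite, Finset.prod_const,
      Finset.prod_const, one_pow, mul_one]
  constructor
  · intro hd
    have hBadge := bad_card_ge hσ₀ hσ hjoin hmeas hd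
    have hzpow : (n : ℝ) ^ (-((Finset.univ.image j).card : ℤ))
        = ((n : ℝ)⁻¹) ^ (Finset.univ.image j).card := by
      rw [zpow_neg, zpow_natCast, inv_pow]
    rw [hzpow]
    calc |cumProd (permMeasure n) σ₀ (fun a => Zr n (j a))|
        ≤ 50 ^ σ₀.card *
          ((n : ℝ)⁻¹) ^ (σ₀.filter (fun A => ∃ u ∈ A, ∃ v ∈ A, j u ≠ j v)).card := by
          rw [← hprod_eq]; exact hprod_le
      _ ≤ 50 ^ σ₀.card * ((n : ℝ)⁻¹) ^ (Finset.univ.image j).card := by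
          apply mul_le_mul_of_nonneg_left _ (by positivity)
          apply pow_le_pow_of_le_one (by positivity) _ hBadge
          rw [inv_le_one_iff₀]
          right
          exact_mod_cast by omega
  · intro _
    calc |cumProd (permMeasure n) σ₀ (fun a => Zr n (j a))|
        ≤ ∏ A ∈ σ₀, (50 * (if ∃ u ∈ A, ∃ v ∈ A, j u ≠ j v then (n : ℝ)⁻¹ else 1)) :=
          hprod_le
      _ ≤ ∏ _A ∈ σ₀, (50 : ℝ) := by
          refine Finset.prod_le_prod (fun A _ => by positivity) fun A _ => ?_
          by_cases hpred : ∃ u ∈ A, ∃ v ∈ A, j u ≠ j v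
          · rw [if_pos hpred]
            have h1 : (n : ℝ)⁻¹ ≤ 1 := by
              rw [inv_le_one_iff₀]; right; exact_mod_cast by omega
            nlinarith
          · rw [if_neg hpred, mul_one]
      _ = 50 ^ σ₀.card := by rw [Finset.prod_const]
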